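/- For every k ∈ ℕ the following holds. Let G₁ and G₂ be vertex-disjoint (6k+2)-regular graphs, each on 12k+6 vertices, let G₃ be the complete bipartite graph between V(G₁) and V(G₂), and let G := G₁ ∪ G₂ ∪ G₃, a graph on n = 24k+12 vertices. Then G is K₃-divisible, δ(G) = 3n/4 − 1, and G has no K₃-decomposition. -/

import Mathlib

/-- A graph `G` has a `K₃`-decomposition if its edge set can be partitioned into
triangles. -/
def HasK3Decomposition {V : Type*} (G : SimpleGraph V) : Prop :=
  ∃ T : Set (Finset V),
    (∀ t ∈ T, G.IsNClique 3 t) ∧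
    ∀ e ∈ G.edgeSet, ∃! t, t ∈ T ∧ ∀ v ∈ e, v ∈ t

/-- A graph is `K₃`-divisible if `3` divides its number of edges and every vertex
has even degree. -/
def K3Divisible {V : Type*} (G : SimpleGraph V) : Prop :=
  3 ∣ G.edgeSet.ncard ∧ ∀ v, Even (G.neighborSet v).ncard

/-- The graph `G = G₁ ∪ G₂ ∪ G₃`, where `G₁` and `G₂` are placed on two disjoint vertex
sets and `G₃` is the complete bipartite graph between them. -/
def extremalGraph (k : ℕ) (G₁ G₂ : SimpleGraph (Fin (12 * k + 6))) :
    SimpleGraph (Fin (12 * k + 6) ⊕ Fin (12 * k + 6)) :=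
  SimpleGraph.fromRel (fun a b =>
    (∃ x y, a = Sum.inl x ∧ b = Sum.inl y ∧ G₁.Adj x y) ∨
    (∃ x y, a = Sum.inr x ∧ b = Sum.inr y ∧ G₂.Adj x y) ∨
    (∃ x y, a = Sum.inl x ∧ b = Sum.inr y))

section Aux

variable {k : ℕ} {G₁ G₂ : SimpleGraph (Fin (12 * k + 6))}

lemma adj_ll {x y : Fin (12*k+6)} :
    (extremalGraph k G₁ G₂).Adj (Sum.inl x) (Sum.inl y) ↔ G₁.Adj x y := by
  rw [extremalGraph, SimpleGraph.fromRel_adj]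
  constructor
  · rintro ⟨hne, (⟨a,b,ha,hb,hadj⟩|⟨a,b,ha,hb,hadj⟩|⟨a,b,ha,hb⟩)|(⟨a,b,ha,hb,hadj⟩|⟨a,b,ha,hb,hadj⟩|⟨a,b,ha,hb⟩)⟩ <;>
      first
        | (exact absurd ha Sum.inl_ne_inr)
        | (exact absurd hb Sum.inl_ne_inr)
        | (exact absurd ha.symm Sum.inl_ne_inr)
        | (exact absurd hb.symm Sum.inl_ne_inr)
        | (injection ha with h1; injection hb with h2; subst h1; subst h2;
            first | assumption | exact hadj.symm)
  · intro h
    exact ⟨by simpa using h.ne, Or.inl (Or.inl ⟨x, y, rfl, rfl, h⟩)⟩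

lemma adj_rr {x y : Fin (12*k+6)} :
    (extremalGraph k G₁ G₂).Adj (Sum.inr x) (Sum.inr y) ↔ G₂.Adj x y := by
  rw [extremalGraph, SimpleGraph.fromRel_adj]
  constructor
  · rintro ⟨hne, (⟨a,b,ha,hb,hadj⟩|⟨a,b,ha,hb,hadj⟩|⟨a,b,ha,hb⟩)|(⟨a,b,ha,hb,hadj⟩|⟨a,b,ha,hb,hadj⟩|⟨a,b,ha,hb⟩)⟩ <;>
      first
        | (exact absurd ha Sum.inl_ne_inr)
        | (exact absurd hb Sum.inl_ne_inr)
        | (exact absurd ha.symm Sum.inl_ne_inr)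
        | (exact absurd hb.symm Sum.inl_ne_inr)
        | (injection ha with h1; injection hb with h2; subst h1; subst h2;
            first | assumption | exact hadj.symm)
  · intro h
    exact ⟨by simpa using h.ne, Or.inl (Or.inr (Or.inl ⟨x, y, rfl, rfl, h⟩))⟩

lemma adj_lr {x y : Fin (12*k+6)} :
    (extremalGraph k G₁ G₂).Adj (Sum.inl x) (Sum.inr y) := by
  rw [extremalGraph, SimpleGraph.fromRel_adj]
  exact ⟨by simp, Or.inl (Or.inr (Or.inr ⟨x, y, rfl, rfl⟩))⟩

lemma deg_eg (hreg1 : ∀ v, (G₁.neighborSet v).ncard = 6 * k + 2)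
    (hreg2 : ∀ v, (G₂.neighborSet v).ncard = 6 * k + 2)
    (v : Fin (12*k+6) ⊕ Fin (12*k+6)) :
    ((extremalGraph k G₁ G₂).neighborSet v).ncard = 18 * k + 8 := by
  cases v with
  | inl x =>
    have h : (extremalGraph k G₁ G₂).neighborSet (Sum.inl x)
        = Sum.inl '' (G₁.neighborSet x) ∪ Sum.inr '' Set.univ := by
      ext b
      cases b with
      | inl y => simp [SimpleGraph.neighborSet, adj_ll, Sum.inl_injective.eq_iff]
      | inr y => simp [SimpleGraph.neighborSet, adj_lr]
    rw [h, Set.ncard_union_eq]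
    · rw [Set.ncard_image_of_injective _ Sum.inl_injective,
        Set.ncard_image_of_injective _ Sum.inr_injective, hreg1, Set.ncard_univ]
      simp; ring
    · simp [Set.disjoint_left]
  | inr x =>
    have h : (extremalGraph k G₁ G₂).neighborSet (Sum.inr x)
        = Sum.inr '' (G₂.neighborSet x) ∪ Sum.inl '' Set.univ := by
      ext b
      cases b with
      | inl y => simp [SimpleGraph.neighborSet, (adj_lr (x := y) (y := x)).symm]
      | inr y => simp [SimpleGraph.neighborSet, adj_rr, Sum.inr_injective.eq_iff]
    rw [h, Set.ncard_union_eq]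
    · rw [Set.ncard_image_of_injective _ Sum.inr_injective,
        Set.ncard_image_of_injective _ Sum.inl_injective, hreg2, Set.ncard_univ]
      simp; ring
    · simp [Set.disjoint_left]

lemma edge_count (hreg1 : ∀ v, (G₁.neighborSet v).ncard = 6 * k + 2)
    (hreg2 : ∀ v, (G₂.neighborSet v).ncard = 6 * k + 2) :
    (extremalGraph k G₁ G₂).edgeSet.ncard = (12 * k + 6) * (18 * k + 8) := by
  classical
  set G := extremalGraph k G₁ G₂ with hG
  have hdeg : ∀ v, G.degree v = 18 * k + 8 := by
    intro v
    rw [← SimpleGraph.card_neighborSet_eq_degree, ← Nat.card_eq_fintype_card,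
      Nat.card_coe_set_eq]
    exact deg_eg hreg1 hreg2 v
  have hsum := SimpleGraph.sum_degrees_eq_twice_card_edges G
  rw [Finset.sum_congr rfl (fun v _ => hdeg v), Finset.sum_const] at hsum
  have hcard : (Finset.univ : Finset (Fin (12*k+6) ⊕ Fin (12*k+6))).card = 24 * k + 12 := by
    simp [Fintype.card_sum]
    omega
  rw [hcard, smul_eq_mul] at hsum
  have hE : G.edgeSet.ncard = G.edgeFinset.card := by
    rw [SimpleGraph.edgeFinset_card, ← Nat.card_eq_fintype_card, Nat.card_coe_set_eq]
  have hr : (24 * k + 12) * (18 * k + 8) = 2 * ((12 * k + 6) * (18 * k + 8)) := by ring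
  omega

lemma no_decomp (G : SimpleGraph (Fin (12 * k + 6) ⊕ Fin (12 * k + 6)))
    (hlr : ∀ x y, G.Adj (Sum.inl x) (Sum.inr y))
    (hEcard : G.edgeSet.ncard = (12 * k + 6) * (18 * k + 8)) :
    ¬ HasK3Decomposition G := by
  classical
  rintro ⟨T, hclique, hcover⟩
  -- uniqueness of the triangle through an edge
  have huniq : ∀ u v : Fin (12*k+6) ⊕ Fin (12*k+6), G.Adj u v → ∀ t1 ∈ T, u ∈ t1 → v ∈ t1 →
      ∀ t2 ∈ T, u ∈ t2 → v ∈ t2 → t1 = t2 := by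
    intro u v huv t1 ht1 hu1 hv1 t2 ht2 hu2 hv2
    obtain ⟨t, -, hu⟩ := hcover s(u, v) ((SimpleGraph.mem_edgeSet _).2 huv)
    have h1 := hu t1 ⟨ht1, fun z hz => by
      rcases Sym2.mem_iff.1 hz with rfl | rfl <;> assumption⟩
    have h2 := hu t2 ⟨ht2, fun z hz => by
      rcases Sym2.mem_iff.1 hz with rfl | rfl <;> assumption⟩
    rw [h1, h2]
  -- the triangle through each cross edge
  have hex : ∀ p : Fin (12*k+6) × Fin (12*k+6), ∃ t, t ∈ T ∧ Sum.inl p.1 ∈ t ∧ Sum.inr p.2 ∈ t := by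
    intro p
    obtain ⟨t, ⟨htT, hmem⟩, -⟩ :=
      hcover s(Sum.inl p.1, Sum.inr p.2) ((SimpleGraph.mem_edgeSet _).2 (hlr _ _))
    exact ⟨t, htT, hmem _ (Sym2.mem_mk_left _ _), hmem _ (Sym2.mem_mk_right _ _)⟩
  choose tri htriT htril htrir using hex
  have htricard : ∀ p, (tri p).card = 3 := fun p => (hclique _ (htriT p)).2
  -- the third vertex of each such triangle
  have hthird : ∀ p : Fin (12*k+6) × Fin (12*k+6), ∃ z ∈ tri p, z ≠ Sum.inl p.1 ∧ z ≠ Sum.inr p.2 := by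
    intro p
    by_contra h
    push_neg at h
    have hsub : tri p ⊆ {Sum.inl p.1, Sum.inr p.2} := by
      intro z hz
      rcases Classical.em (z = Sum.inl p.1) with rfl | h''
      · simp
      · simp [h z hz h'']
    have := Finset.card_le_card hsub
    rw [htricard p] at this
    have h2 : ({Sum.inl p.1, Sum.inr p.2} : Finset (Fin (12*k+6) ⊕ Fin (12*k+6))).card ≤ 2 :=
      Finset.card_insert_le _ _ |>.trans (by simp)
    omega
  choose c hcT hcl hcr using hthird
  -- the cross edges
  set C : Finset (Sym2 (Fin (12*k+6) ⊕ Fin (12*k+6))) :=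
    Finset.univ.image (fun q : Fin (12*k+6) × Fin (12*k+6) => s(Sum.inl q.1, Sum.inr q.2)) with hC
  set W : Finset (Sym2 (Fin (12*k+6) ⊕ Fin (12*k+6))) := G.edgeFinset \ C with hW
  -- the within edge associated to each cross edge
  set F : Fin (12*k+6) × Fin (12*k+6) → Sym2 (Fin (12*k+6) ⊕ Fin (12*k+6)) := fun p =>
    Sum.elim (fun z => s(Sum.inl z, Sum.inl p.1)) (fun z => s(Sum.inr z, Sum.inr p.2)) (c p)
    with hF
  have hkey : ∀ p, (∃ u v, F p = s(u, v) ∧ G.Adj u v ∧ u ∈ tri p ∧ v ∈ tri p) ∧ F p ∉ C := by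
    intro p
    rcases hcp : c p with z | z
    · have hFp : F p = s(Sum.inl z, Sum.inl p.1) := by simp only [hF]; rw [hcp]; rfl
      have hne : Sum.inl z ≠ Sum.inl p.1 := hcp ▸ hcl p
      have hadj : G.Adj (Sum.inl z) (Sum.inl p.1) :=
        (hclique _ (htriT p)).1 (Finset.mem_coe.2 (hcp ▸ hcT p))
          (Finset.mem_coe.2 (htril p)) hne
      refine ⟨⟨_, _, hFp, hadj, hcp ▸ hcT p, htril p⟩, ?_⟩
      intro hmem
      rw [hC] at hmem
      simp only [Finset.mem_image, Finset.mem_univ, true_and] at hmem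
      obtain ⟨q, hq⟩ := hmem
      rw [hFp, Sym2.eq_iff] at hq
      rcases hq with ⟨h1, h2⟩ | ⟨h1, h2⟩ <;> simp at h1 h2
    · have hFp : F p = s(Sum.inr z, Sum.inr p.2) := by simp only [hF]; rw [hcp]; rfl
      have hne : Sum.inr z ≠ Sum.inr p.2 := hcp ▸ hcr p
      have hadj : G.Adj (Sum.inr z) (Sum.inr p.2) :=
        (hclique _ (htriT p)).1 (Finset.mem_coe.2 (hcp ▸ hcT p))
          (Finset.mem_coe.2 (htrir p)) hne
      refine ⟨⟨_, _, hFp, hadj, hcp ▸ hcT p, htrir p⟩, ?_⟩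
      intro hmem
      rw [hC] at hmem
      simp only [Finset.mem_image, Finset.mem_univ, true_and] at hmem
      obtain ⟨q, hq⟩ := hmem
      rw [hFp, Sym2.eq_iff] at hq
      rcases hq with ⟨h1, h2⟩ | ⟨h1, h2⟩ <;> simp at h1 h2
  have hFmem : ∀ p, ∀ z ∈ F p, z ∈ tri p := by
    intro p z hz
    obtain ⟨⟨u, v, hFp, -, hu, hv⟩, -⟩ := hkey p
    rw [hFp] at hz
    rcases Sym2.mem_iff.1 hz with rfl | rfl <;> assumption
  have hFW : ∀ p, F p ∈ W := by
    intro p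
    obtain ⟨⟨u, v, hFp, hadj, -, -⟩, hnC⟩ := hkey p
    rw [hW, Finset.mem_sdiff]
    exact ⟨SimpleGraph.mem_edgeFinset.2 (hFp ▸ (SimpleGraph.mem_edgeSet _).2 hadj), hnC⟩
  -- key inequality : N² ≤ 2 * |W|
  have hmain : (Finset.univ : Finset (Fin (12*k+6) × Fin (12*k+6))).card ≤ 2 * W.card := by
    apply Finset.card_le_mul_card_image_of_maps_to (fun p _ => hFW p)
    intro w hw
    rcases Finset.eq_empty_or_nonempty (Finset.univ.filter (fun p => F p = w)) with he | ⟨p, hp⟩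
    · simp [he]
    · simp only [Finset.mem_filter, Finset.mem_univ, true_and] at hp
      -- every member of the fiber has the same triangle as p
      have hsame : ∀ q, F q = w → tri q = tri p := by
        intro q hq
        obtain ⟨⟨u, v, hFq, hadj, hu, hv⟩, -⟩ := hkey q
        have hup : u ∈ tri p := hFmem p u (by rw [hp, ← hq, hFq]; exact Sym2.mem_mk_left _ _)
        have hvp : v ∈ tri p := hFmem p v (by rw [hp, ← hq, hFq]; exact Sym2.mem_mk_right _ _)
        exact huniq u v hadj _ (htriT q) hu hv _ (htriT p) hup hvp
      have hsub : (Finset.univ.filter (fun q => F q = w)) ⊆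
          Finset.univ.filter
            (fun q : Fin (12*k+6) × Fin (12*k+6) => Sum.inl q.1 ∈ tri p ∧ Sum.inr q.2 ∈ tri p) := by
        intro q hq
        simp only [Finset.mem_filter, Finset.mem_univ, true_and] at hq
        have := hsame q hq
        simp only [Finset.mem_filter, Finset.mem_univ, true_and]
        exact ⟨this ▸ htril q, this ▸ htrir q⟩
      refine (Finset.card_le_card hsub).trans ?_
      -- the fiber injects into (left part) × (right part)
      set t := tri p with ht
      set L := {v ∈ t | v.isLeft = true} with hL
      set R := {v ∈ t | ¬ v.isLeft = true} with hR
      have hinj : (Finset.univ.filter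
            (fun q : Fin (12*k+6) × Fin (12*k+6) => Sum.inl q.1 ∈ t ∧ Sum.inr q.2 ∈ t)).card
          ≤ (L ×ˢ R).card := by
        apply Finset.card_le_card_of_injOn
          (fun q => (Sum.inl q.1, Sum.inr q.2))
        · intro q hq
          simp only [Finset.coe_filter, Finset.mem_coe, Finset.mem_filter, Finset.mem_univ, true_and, Set.mem_setOf_eq] at hq
          simp [hL, hR, Finset.mem_product, hq.1, hq.2]
        · intro a _ b _ hab
          simp only [Prod.mk.injEq, Sum.inl.injEq, Sum.inr.injEq] at hab
          exact Prod.ext hab.1 hab.2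
      refine hinj.trans ?_
      rw [Finset.card_product]
      have hLR : L.card + R.card = t.card :=
        Finset.card_filter_add_card_filter_not _
      rw [htricard p] at hLR
      have hL3 : L.card ≤ 3 := by omega
      interval_cases h : L.card <;> omega
  -- now count
  have hCsub : C ⊆ G.edgeFinset := by
    intro e he
    rw [hC] at he
    simp only [Finset.mem_image, Finset.mem_univ, true_and] at he
    obtain ⟨q, rfl⟩ := he
    exact SimpleGraph.mem_edgeFinset.2 ((SimpleGraph.mem_edgeSet _).2 (hlr _ _))
  have hCcard : C.card = (12*k+6) * (12*k+6) := by
    rw [hC, Finset.card_image_of_injective _ ?_, Finset.card_univ, Fintype.card_prod,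
      Fintype.card_fin]
    intro a b hab
    rw [Sym2.eq_iff] at hab
    rcases hab with ⟨h1, h2⟩ | ⟨h1, h2⟩
    · exact Prod.ext (Sum.inl_injective h1) (Sum.inr_injective h2)
    · exact absurd h1 Sum.inl_ne_inr
  have hEcard' : G.edgeFinset.card = (12*k+6) * (18 * k + 8) := by
    rw [← hEcard, SimpleGraph.edgeFinset_card, ← Nat.card_eq_fintype_card,
      Nat.card_coe_set_eq]
  have hWcard : W.card = (12*k+6) * (18 * k + 8) - (12*k+6) * (12*k+6) := by
    rw [hW, Finset.card_sdiff_of_subset hCsub, hEcard', hCcard]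
  have huni : (Finset.univ : Finset (Fin (12*k+6) × Fin (12*k+6))).card = (12*k+6) * (12*k+6) := by
    rw [Finset.card_univ, Fintype.card_prod, Fintype.card_fin]
  rw [huni, hWcard] at hmain
  have hle : (12*k+6) * (12*k+6) ≤ (12*k+6) * (18 * k + 8) := Nat.mul_le_mul_left _ (by omega)
  have h3 : (12*k+6) * (3 * (12*k+6)) ≤ (12*k+6) * (2 * (18 * k + 8)) := by
    have : (12*k+6) * (3 * (12*k+6)) = 3 * ((12*k+6) * (12*k+6)) := by ring
    rw [this]
    have : (12*k+6) * (2 * (18 * k + 8)) = 2 * ((12*k+6) * (18 * k + 8)) := by ring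
    rw [this]
    omega
  have := Nat.le_of_mul_le_mul_left h3 (show 0 < (12*k+6) by omega)
  omega

end Aux

/-- Let `G₁`, `G₂` be vertex-disjoint `(6k+2)`-regular graphs on `12k+6` vertices each,
let `G₃` be the complete bipartite graph between them and `G := G₁ ∪ G₂ ∪ G₃`, a graph
on `n = 24k+12` vertices. Then `G` is `K₃`-divisible, `δ(G) = 3n/4 − 1`, and `G` has no
`K₃`-decomposition. -/
theorem extremal_example (k : ℕ) (G₁ G₂ : SimpleGraph (Fin (12 * k + 6)))
    (hreg1 : ∀ v, (G₁.neighborSet v).ncard = 6 * k + 2)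
    (hreg2 : ∀ v, (G₂.neighborSet v).ncard = 6 * k + 2) :
    K3Divisible (extremalGraph k G₁ G₂) ∧
    (∀ v, 3 * (24 * k + 12) / 4 - 1 ≤ ((extremalGraph k G₁ G₂).neighborSet v).ncard) ∧
    (∃ v, ((extremalGraph k G₁ G₂).neighborSet v).ncard = 3 * (24 * k + 12) / 4 - 1) ∧
    ¬ HasK3Decomposition (extremalGraph k G₁ G₂) := by
  refine ⟨⟨?_, ?_⟩, ?_, ?_, ?_⟩
  · rw [edge_count hreg1 hreg2]
    exact ⟨(4 * k + 2) * (18 * k + 8), by ring⟩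
  · intro v
    rw [deg_eg hreg1 hreg2 v]
    exact ⟨9 * k + 4, by ring⟩
  · intro v
    rw [deg_eg hreg1 hreg2 v]
    omega
  · refine ⟨Sum.inl ⟨0, by omega⟩, ?_⟩
    rw [deg_eg hreg1 hreg2]
    omega
  · exact no_decomp _ (fun x y => adj_lr) (edge_count hreg1 hreg2)
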